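/- For every positive integer r there exists a nontrivial connected graph G with γ'(G) − γ(G) > r, and a nontrivial connected graph H with γ(H) − γ'(H) > r. (E.g., G = K_{2r+4} and H = R_{12r}.) -/

import Mathlib

/-- Two elements (vertices or edges) of a graph are *associated* if they are
adjacent or incident. -/
def elemAssoc {V : Type*} (G : SimpleGraph V) : V ⊕ Sym2 V → V ⊕ Sym2 V → Prop
  | .inl u, .inl v => G.Adj u v
  | .inl u, .inr e => u ∈ e
  | .inr e, .inl u => u ∈ e
  | .inr e, .inr f => e ≠ f ∧ ∃ u, u ∈ e ∧ u ∈ f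

/-- The set of vertex-elements. -/
def vertElems (V : Type*) : Set (V ⊕ Sym2 V) := Set.range Sum.inl

/-- The set of edge-elements of `G`. -/
def edgeElems {V : Type*} (G : SimpleGraph V) : Set (V ⊕ Sym2 V) :=
  Sum.inr '' G.edgeSet

/-- `A` dominates `W`: every element of `W \ (A ∩ W)` is associated to an element of `A`. -/
def Dominates {V : Type*} (G : SimpleGraph V) (A W : Set (V ⊕ Sym2 V)) : Prop :=
  ∀ w ∈ W, w ∉ A → ∃ a ∈ A, elemAssoc G a w

/-- `γ_{U,W}(G)`: minimum cardinality of a subset `A ⊆ U` dominating `W`. -/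
noncomputable def gammaUW {V : Type*} (G : SimpleGraph V)
    (U W : Set (V ⊕ Sym2 V)) : ℕ :=
  sInf {n | ∃ A ⊆ U, Dominates G A W ∧ A.ncard = n}

/-- The ridged graph `R_{3n}`.  The vertex `(i, 0)` is `u_{i+1}`, `(i, 1)` is `v_{i+1}`
and `(i, 2)` is `w_{i+1}`.  The `u_i` form a path and each `u_i` has the two pendant
neighbours `v_i`, `w_i`. -/
def ridgedRel (n : ℕ) : Fin n × Fin 3 → Fin n × Fin 3 → Prop
  | (i, c), (j, d) =>
      (c = 0 ∧ d = 0 ∧ (j : ℕ) = (i : ℕ) + 1) ∨ (c = 0 ∧ i = j ∧ (d = 1 ∨ d = 2))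

def ridgedGraph (n : ℕ) : SimpleGraph (Fin n × Fin 3) where
  Adj x y := x ≠ y ∧ (ridgedRel n x y ∨ ridgedRel n y x)
  symm := ⟨fun _ _ ⟨h1, h2⟩ => ⟨h1.symm, h2.symm⟩⟩
  loopless := ⟨fun _ ⟨h1, _⟩ => h1 rfl⟩

-- nonemptiness of the defining set when U = W
lemma gamma_set_nonempty {V : Type*} [Finite V] (G : SimpleGraph V) (U : Set (V ⊕ Sym2 V)) :
    {n | ∃ A ⊆ U, Dominates G A U ∧ A.ncard = n}.Nonempty :=
  ⟨U.ncard, U, subset_rfl, fun w hw hwA => absurd hw hwA, rfl⟩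

lemma complete_vert_le (k : ℕ) (hk : 0 < k) :
    gammaUW (⊤ : SimpleGraph (Fin k)) (vertElems (Fin k)) (vertElems (Fin k)) ≤ 1 := by
  apply Nat.sInf_le
  refine ⟨{Sum.inl ⟨0, hk⟩}, ?_, ?_, by simp⟩
  · intro x hx; rw [Set.mem_singleton_iff] at hx; exact ⟨_, hx.symm⟩
  · rintro w ⟨v, rfl⟩ hwA
    refine ⟨Sum.inl ⟨0, hk⟩, rfl, ?_⟩
    show (⊤ : SimpleGraph (Fin k)).Adj _ v
    simp only [SimpleGraph.top_adj]
    intro h; exact hwA (by rw [← h]; rfl)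

lemma complete_edge_ge (r : ℕ) :
    r + 2 ≤ gammaUW (⊤ : SimpleGraph (Fin (2*r+4))) (edgeElems ⊤) (edgeElems ⊤) := by
  set G : SimpleGraph (Fin (2*r+4)) := ⊤ with hG
  obtain ⟨A, hAU, hdom, hcard⟩ := Nat.sInf_mem (gamma_set_nonempty G (edgeElems G))
  rw [gammaUW, ← hcard]
  by_contra h
  push_neg at h
  -- A has at most r+1 edges
  have hAcard : A.ncard ≤ r + 1 := by omega
  set B : Set (Sym2 (Fin (2*r+4))) := Sum.inr ⁻¹' A with hB
  have hAB : A = Sum.inr '' B := by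
    apply Set.Subset.antisymm
    · intro x hx
      obtain ⟨e, _, rfl⟩ := hAU hx
      exact ⟨e, hx, rfl⟩
    · rintro x ⟨e, he, rfl⟩; exact he
  have hBcard : B.ncard ≤ r + 1 := by
    rwa [hAB, Set.ncard_image_of_injective _ Sum.inr_injective] at hAcard
  set S : Set (Fin (2*r+4)) := {v | ∃ e ∈ B, v ∈ e} with hS
  -- |S| ≤ 2 * |B|
  have hfin : B.Finite := Set.toFinite B
  have hSB : S.ncard ≤ 2 * B.ncard := by
    have key : Nat.card S ≤ Nat.card (B × Bool) := by
      apply Nat.card_le_card_of_injective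
        (f := fun x : S => ((⟨x.2.choose, x.2.choose_spec.1⟩ : B),
          decide ((x : Fin (2*r+4)) = x.2.choose.out.1)))
      intro x y hxy
      simp only [Prod.mk.injEq, Subtype.mk.injEq, decide_eq_decide] at hxy
      obtain ⟨he, hd⟩ := hxy
      have hx2 : (x : Fin (2*r+4)) ∈ y.2.choose := he ▸ x.2.choose_spec.2
      have hy2 : (y : Fin (2*r+4)) ∈ y.2.choose := y.2.choose_spec.2
      rw [he] at hd
      have hmem : ∀ v : Fin (2*r+4), v ∈ y.2.choose →
          v = y.2.choose.out.1 ∨ v = y.2.choose.out.2 := by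
        intro v hv
        have he2 : y.2.choose = s(y.2.choose.out.1, y.2.choose.out.2) := by
          conv_lhs => rw [← Quot.out_eq y.2.choose]
        rw [he2, Sym2.mem_iff] at hv
        exact hv
      apply Subtype.ext
      rcases hmem _ hx2 with h1 | h1 <;> rcases hmem _ hy2 with h2 | h2
      · exact h1.trans h2.symm
      · exact h1.trans (hd.mp h1).symm
      · exact (hd.mpr h2).trans h2.symm
      · exact h1.trans h2.symm
    have hb : Nat.card (B × Bool) = B.ncard * 2 := by
      rw [Nat.card_prod, Nat.card_coe_set_eq]
      simp [Nat.card_eq_fintype_card]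
    rw [hb, Nat.card_coe_set_eq] at key
    omega
  have hScard : S.ncard ≤ 2 * r + 2 := le_trans hSB (by omega)
  -- find two vertices outside S
  have hcompl : (1 : ℕ) < Sᶜ.ncard := by
    have := Set.ncard_add_ncard_compl S
    simp only [Set.ncard_univ, Nat.card_eq_fintype_card, Fintype.card_fin] at this
    omega
  obtain ⟨u, v, hu, hv, huv⟩ := (Set.one_lt_ncard_iff (Set.toFinite Sᶜ)).mp hcompl
  -- the edge s(u,v) is undominated
  have hedge : (Sum.inr s(u, v) : Fin (2*r+4) ⊕ Sym2 (Fin (2*r+4))) ∈ edgeElems G :=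
    ⟨s(u,v), by simp [hG, huv], rfl⟩
  have hnotinA : (Sum.inr s(u, v) : Fin (2*r+4) ⊕ Sym2 (Fin (2*r+4))) ∉ A := by
    intro hmem
    exact hu ⟨s(u,v), hmem, Sym2.mem_mk_left u v⟩
  obtain ⟨a, haA, hassoc⟩ := hdom _ hedge hnotinA
  obtain ⟨f, hf, rfl⟩ := hAU haA
  obtain ⟨-, x, hxf, hxuv⟩ := hassoc
  rw [Sym2.mem_iff] at hxuv
  rcases hxuv with rfl | rfl
  · exact hu ⟨f, haA, hxf⟩
  · exact hv ⟨f, haA, hxf⟩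

lemma ridged_adj_pendant (n : ℕ) (i : Fin n) (c : Fin 3) (hc : c ≠ 0) :
    (ridgedGraph n).Adj (i, 0) (i, c) := by
  refine ⟨by simp [Prod.ext_iff, Ne.symm hc, hc], Or.inl (Or.inr ⟨rfl, rfl, ?_⟩)⟩
  have h3 := c.isLt
  have h0 : c.val ≠ 0 := fun h => hc (Fin.ext h)
  rcases Nat.lt_or_ge c.val 2 with h | h
  · left; exact Fin.ext (by omega)
  · right; exact Fin.ext (by omega)

lemma ridged_adj_path (n : ℕ) (i j : Fin n) (hij : (j : ℕ) = (i : ℕ) + 1) :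
    (ridgedGraph n).Adj (i, 0) (j, 0) := by
  refine ⟨?_, Or.inl (Or.inl ⟨rfl, rfl, hij⟩)⟩
  intro h
  have h1 : i = j := congrArg Prod.fst h
  have := congrArg Fin.val h1
  omega

lemma ridged_connected (n : ℕ) (hn : 0 < n) : (ridgedGraph n).Connected := by
  have base : ∀ m (h : m < n),
      (ridgedGraph n).Reachable (⟨m, h⟩, 0) (⟨0, hn⟩, 0) := by
    intro m
    induction m with
    | zero => intro h; rfl
    | succ k ih =>
      intro h
      have hk : k < n := by omega
      exact ((ridged_adj_path n ⟨k, hk⟩ ⟨k+1, h⟩ rfl).reachable.symm).trans (ih hk)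
  have reach : ∀ x : Fin n × Fin 3, (ridgedGraph n).Reachable x (⟨0, hn⟩, 0) := by
    rintro ⟨i, c⟩
    by_cases hc : c = 0
    · subst hc; exact base i.val i.isLt
    · exact ((ridged_adj_pendant n i c hc).reachable.symm).trans (base i.val i.isLt)
  have : Nonempty (Fin n × Fin 3) := ⟨(⟨0, hn⟩, 0)⟩
  exact ⟨fun x y => (reach x).trans (reach y).symm⟩

lemma ridged_gamma_ge (n : ℕ) :
    n ≤ gammaUW (ridgedGraph n) (vertElems (Fin n × Fin 3)) (vertElems (Fin n × Fin 3)) := by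
  classical
  obtain ⟨A, hAU, hdom, hcard⟩ :=
    Nat.sInf_mem (gamma_set_nonempty (ridgedGraph n) (vertElems (Fin n × Fin 3)))
  rw [gammaUW, ← hcard]
  have key : ∀ i : Fin n, Sum.inl (i, (1 : Fin 3)) ∈ A ∨ Sum.inl (i, (0 : Fin 3)) ∈ A := by
    intro i
    by_cases hmem : Sum.inl (i, (1 : Fin 3)) ∈ A
    · left; exact hmem
    right
    obtain ⟨a, ha, hass⟩ := hdom _ ⟨(i, 1), rfl⟩ hmem
    obtain ⟨u, rfl⟩ := hAU ha
    obtain ⟨j, d⟩ := u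
    obtain ⟨hne, hrel⟩ := hass
    rcases hrel with h | h
    · rcases h with ⟨_, hd, _⟩ | ⟨hc, hij, _⟩
      · exact absurd hd (by decide)
      · subst hc; subst hij; exact ha
    · rcases h with ⟨hd, _, _⟩ | ⟨hd, _, _⟩ <;> exact absurd hd (by decide)
  set f : Fin n → (Fin n × Fin 3) ⊕ Sym2 (Fin n × Fin 3) := fun i =>
    if Sum.inl (i, (1 : Fin 3)) ∈ A then Sum.inl (i, 1) else Sum.inl (i, 0) with hf
  have hfA : ∀ i, f i ∈ A := by
    intro i
    by_cases h : Sum.inl (i, (1 : Fin 3)) ∈ A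
    · simp only [hf, if_pos h]; exact h
    · simp only [hf, if_neg h]; exact (key i).resolve_left h
  have hfinj : Function.Injective f := by
    intro i j hij
    simp only [hf] at hij
    split_ifs at hij <;>
      · simp only [Sum.inl.injEq, Prod.mk.injEq] at hij
        exact hij.1
  have : Nat.card (Fin n) ≤ Nat.card A := by
    apply Nat.card_le_card_of_injective (f := fun i : Fin n => (⟨f i, hfA i⟩ : A))
    intro i j h
    exact hfinj (congrArg Subtype.val h)
  rwa [Nat.card_eq_fintype_card, Fintype.card_fin, Nat.card_coe_set_eq] at this

lemma ridged_edge_le (r : ℕ) :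
    gammaUW (ridgedGraph (2*r+2)) (edgeElems (ridgedGraph (2*r+2)))
      (edgeElems (ridgedGraph (2*r+2))) ≤ r + 1 := by
  set n := 2*r+2 with hn
  have hlt1 : ∀ k : Fin (r+1), 2 * (k : ℕ) < n := fun k => by have := k.isLt; omega
  have hlt2 : ∀ k : Fin (r+1), 2 * (k : ℕ) + 1 < n := fun k => by have := k.isLt; omega
  set ed : Fin (r+1) → Sym2 (Fin n × Fin 3) := fun k =>
    s((⟨2*k, hlt1 k⟩, 0), (⟨2*k+1, hlt2 k⟩, 0)) with hed
  have hedadj : ∀ k : Fin (r+1), (ridgedGraph n).Adj (⟨2*k, hlt1 k⟩, 0) (⟨2*k+1, hlt2 k⟩, 0) :=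
    fun k => ridged_adj_path n _ _ rfl
  set A : Set ((Fin n × Fin 3) ⊕ Sym2 (Fin n × Fin 3)) := Set.range (fun k => Sum.inr (ed k))
    with hA
  apply Nat.sInf_le
  refine ⟨A, ?_, ?_, ?_⟩
  · rintro x ⟨k, rfl⟩
    exact ⟨ed k, (ridgedGraph n).mem_edgeSet.mpr (hedadj k), rfl⟩
  · rintro w ⟨e, he, rfl⟩ hwA
    induction e using Sym2.ind with
    | _ x y =>
      rw [SimpleGraph.mem_edgeSet] at he
      obtain ⟨hne, hrel⟩ := he
      -- find a u-vertex in the edge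
      have hu : ∃ i : Fin n, ((i, (0:Fin 3)) : Fin n × Fin 3) ∈ s(x, y) := by
        obtain ⟨i, c⟩ := x; obtain ⟨j, d⟩ := y
        rcases hrel with h | h
        · rcases h with ⟨hc, _, _⟩ | ⟨hc, _, _⟩ <;>
            · subst hc; exact ⟨i, Sym2.mem_mk_left _ _⟩
        · rcases h with ⟨hd, _, _⟩ | ⟨hd, _, _⟩ <;>
            · subst hd; exact ⟨j, Sym2.mem_mk_right _ _⟩
      obtain ⟨i, hi⟩ := hu
      have hklt : (i : ℕ) / 2 < r + 1 := by have := i.isLt; omega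
      set k : Fin (r+1) := ⟨(i : ℕ) / 2, hklt⟩ with hk
      refine ⟨Sum.inr (ed k), ⟨k, rfl⟩, ?_, (i, 0), ?_, hi⟩
      · intro hEq
        exact hwA ⟨k, by show Sum.inr (ed k) = _; rw [hEq]⟩
      · rw [hed, Sym2.mem_iff]
        have hiv := i.isLt
        rcases Nat.even_or_odd (i : ℕ) with he' | ho
        · left
          refine Prod.ext (Fin.ext ?_) rfl
          show (i : ℕ) = 2 * ((i : ℕ) / 2)
          obtain ⟨m, hm⟩ := he'
          omega
        · right
          refine Prod.ext (Fin.ext ?_) rfl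
          show (i : ℕ) = 2 * ((i : ℕ) / 2) + 1
          obtain ⟨m, hm⟩ := ho
          omega
  · rw [hA, ← Set.image_univ, Set.ncard_image_of_injective _ ?_, Set.ncard_univ]
    · simp
    · intro a b hab
      simp only [Sum.inr.injEq, hed, Sym2.eq_iff, Prod.mk.injEq, Fin.mk.injEq] at hab
      apply Fin.ext
      omega

theorem stmt15 (r : ℕ) (hr : 0 < r) :
    (∃ (k : ℕ) (G : SimpleGraph (Fin k)), G.Connected ∧ Nontrivial (Fin k) ∧
      ((gammaUW G (edgeElems G) (edgeElems G) : ℤ)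
        - (gammaUW G (vertElems (Fin k)) (vertElems (Fin k)) : ℤ) > r)) ∧
    (∃ (α : Type) (H : SimpleGraph α), H.Connected ∧ Nontrivial α ∧
      ((gammaUW H (vertElems α) (vertElems α) : ℤ)
        - (gammaUW H (edgeElems H) (edgeElems H) : ℤ) > r)) := by
  constructor
  · refine ⟨2*r+4, ⊤, (SimpleGraph.connected_top_iff.mpr ⟨⟨0, by omega⟩⟩), Fin.nontrivial_iff_two_le.mpr (by omega), ?_⟩
    have h1 := complete_edge_ge r
    have h2 := complete_vert_le (2*r+4) (by omega)
    omega
  · refine ⟨Fin (2*r+2) × Fin 3, ridgedGraph (2*r+2), ridged_connected _ (by omega),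
      ⟨(⟨0, by omega⟩, 0), (⟨0, by omega⟩, 1), fun h => by simpa using congrArg Prod.snd h⟩, ?_⟩
    have h1 := ridged_gamma_ge (2*r+2)
    have h2 := ridged_edge_le r
    omega
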